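/- Let P > 0 and write s_{:,i} = (s_{1,i},…,s_{N_r,i}) ∈ ℂ^{N_r}. Suppose W* ∈ ℂ^{N_t×N_r} is an optimal solution of the block-level PM slot-invariant problem (minimize ∑_{i=1}^{N_s} ‖W s_{:,i}‖² over W ∈ ℂ^{N_t×N_r} subject to CI_i(W s_{:,i}, 1) for all i), and let P^{PM} := ∑_{i=1}^{N_s} ‖W* s_{:,i}‖² with P^{PM} > 0. Then the pair (√(P/P^{PM})·W*, √(P/P^{PM})) is an optimal solution of the block-level SB slot-invariant problem: it satisfies CI_i(√(P/P^{PM})·W* s_{:,i}, √(P/P^{PM})) for all i and ∑_i ‖√(P/P^{PM})·W* s_{:,i}‖² ≤ P, and every pair (W, t) with CI_i(W s_{:,i}, t) for all i and ∑_i ‖W s_{:,i}‖² ≤ P satisfies t ≤ √(P/P^{PM}). -/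
import Mathlib


open scoped BigOperators

/-- The constructive-interference (CI) constraint in a given symbol slot:
`CI Nt Nr M h s γ σ x t` holds iff for every user `k`,
`Re((h_kᵀ x)/s_k) − |Im((h_kᵀ x)/s_k)| / tan(π/M) ≥ t·√(γ_k)·σ`. -/
noncomputable def CI (Nt Nr M : ℕ) (h : Fin Nr → Fin Nt → ℂ)
    (s : Fin Nr → ℂ) (γ : Fin Nr → ℝ) (σ : ℝ)
    (x : Fin Nt → ℂ) (t : ℝ) : Prop :=
  ∀ k : Fin Nr,
    ((∑ j, h k j * x j) / s k).re -
        |((∑ j, h k j * x j) / s k).im| / Real.tan (Real.pi / M) ≥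
      t * Real.sqrt (γ k) * σ

lemma CI_smul (Nt Nr M : ℕ) (h : Fin Nr → Fin Nt → ℂ)
    (s : Fin Nr → ℂ) (γ : Fin Nr → ℝ) (σ : ℝ)
    (x : Fin Nt → ℂ) (t c : ℝ) (hc : 0 ≤ c)
    (H : CI Nt Nr M h s γ σ x t) :
    CI Nt Nr M h s γ σ (fun j => (c : ℂ) * x j) (c * t) := by
  intro k
  have hk := H k
  have hsum : (∑ j, h k j * ((c : ℂ) * x j)) = (c : ℂ) * ∑ j, h k j * x j := by
    rw [Finset.mul_sum]; exact Finset.sum_congr rfl fun j _ => by ring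
  simp only [hsum, mul_div_assoc]
  set z := (∑ j, h k j * x j) / s k with hz
  have hre : ((c : ℂ) * z).re = c * z.re := by simp
  have him : ((c : ℂ) * z).im = c * z.im := by simp
  rw [hre, him, abs_mul, abs_of_nonneg hc]
  calc c * z.re - c * |z.im| / Real.tan (Real.pi / M)
      = c * (z.re - |z.im| / Real.tan (Real.pi / M)) := by ring
    _ ≥ c * (t * Real.sqrt (γ k) * σ) := mul_le_mul_of_nonneg_left hk hc
    _ = c * t * Real.sqrt (γ k) * σ := by ring

/-- A block-level PM slot-invariant optimum `W*` with total power `P^{PM} > 0`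
yields, after scaling by `√(P/P^{PM})`, a block-level SB slot-invariant optimum
for budget `P`. -/
theorem stmt13 (Nt Nr Ns M : ℕ) (hNt : 0 < Nt) (hNr : 0 < Nr) (hNs : 0 < Ns)
    (hM : 3 ≤ M)
    (h : Fin Nr → Fin Nt → ℂ)
    (s : Fin Nr → Fin Ns → ℂ) (hs : ∀ k i, s k i ≠ 0)
    (γ : Fin Nr → Fin Ns → ℝ) (hγ : ∀ k i, 0 ≤ γ k i)
    (σ : ℝ) (hσ : 0 < σ)
    (P : ℝ) (hP : 0 < P)
    (Wstar : Matrix (Fin Nt) (Fin Nr) ℂ)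
    (hfeas : ∀ i, CI Nt Nr M h (fun k => s k i) (fun k => γ k i) σ
      (Wstar.mulVec fun k => s k i) 1)
    (hopt : ∀ W : Matrix (Fin Nt) (Fin Nr) ℂ,
      (∀ i, CI Nt Nr M h (fun k => s k i) (fun k => γ k i) σ
        (W.mulVec fun k => s k i) 1) →
      ∑ i, ∑ j, ‖Wstar.mulVec (fun k => s k i) j‖ ^ 2 ≤
        ∑ i, ∑ j, ‖W.mulVec (fun k => s k i) j‖ ^ 2)
    (PPM : ℝ) (hPPM : PPM = ∑ i, ∑ j, ‖Wstar.mulVec (fun k => s k i) j‖ ^ 2)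
    (hPPM0 : 0 < PPM) :
    (∀ i, CI Nt Nr M h (fun k => s k i) (fun k => γ k i) σ
        ((Real.sqrt (P / PPM) • Wstar).mulVec fun k => s k i)
        (Real.sqrt (P / PPM))) ∧
    (∑ i, ∑ j, ‖(Real.sqrt (P / PPM) • Wstar).mulVec (fun k => s k i) j‖ ^ 2 ≤ P) ∧
    (∀ (W : Matrix (Fin Nt) (Fin Nr) ℂ) (t : ℝ),
      (∀ i, CI Nt Nr M h (fun k => s k i) (fun k => γ k i) σ
        (W.mulVec fun k => s k i) t) →
      (∑ i, ∑ j, ‖W.mulVec (fun k => s k i) j‖ ^ 2 ≤ P) →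
      t ≤ Real.sqrt (P / PPM)) := by
  set c := Real.sqrt (P / PPM) with hc
  have hcnn : 0 ≤ c := Real.sqrt_nonneg _
  have hcsq : c ^ 2 = P / PPM := Real.sq_sqrt (le_of_lt (div_pos hP hPPM0))
  have hmv : ∀ i j, (c • Wstar).mulVec (fun k => s k i) j
      = (c : ℂ) * Wstar.mulVec (fun k => s k i) j := by
    intro i j
    rw [Matrix.smul_mulVec]
    simp [Complex.real_smul]
  refine ⟨?_, ?_, ?_⟩
  · intro i
    have := CI_smul Nt Nr M h (fun k => s k i) (fun k => γ k i) σ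
      (Wstar.mulVec fun k => s k i) 1 c hcnn (hfeas i)
    rw [mul_one] at this
    intro k
    have hk := this k
    simpa only [hmv] using hk
  · have hpt : ∀ i j, ‖(c • Wstar).mulVec (fun k => s k i) j‖ ^ 2
        = c ^ 2 * ‖Wstar.mulVec (fun k => s k i) j‖ ^ 2 := by
      intro i j
      rw [hmv, norm_mul, Complex.norm_real, Real.norm_eq_abs, abs_of_nonneg hcnn, mul_pow]
    have hsumeq : ∑ i, ∑ j, ‖(c • Wstar).mulVec (fun k => s k i) j‖ ^ 2
        = c ^ 2 * PPM := by
      rw [hPPM, Finset.mul_sum]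
      refine Finset.sum_congr rfl fun i _ => ?_
      rw [Finset.mul_sum]
      exact Finset.sum_congr rfl fun j _ => hpt i j
    rw [hsumeq, hcsq, div_mul_cancel₀ _ (ne_of_gt hPPM0)]
  · intro W t hWfeas hWpow
    rcases le_or_gt t 0 with ht | ht
    · exact ht.trans hcnn
    · set W' := (t⁻¹ : ℝ) • W with hW'
      have hmv' : ∀ i j, W'.mulVec (fun k => s k i) j
          = ((t⁻¹ : ℝ) : ℂ) * W.mulVec (fun k => s k i) j := by
        intro i j
        rw [hW', Matrix.smul_mulVec]
        simp [Complex.real_smul]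
      have hfeas' : ∀ i, CI Nt Nr M h (fun k => s k i) (fun k => γ k i) σ
          (W'.mulVec fun k => s k i) 1 := by
        intro i
        have := CI_smul Nt Nr M h (fun k => s k i) (fun k => γ k i) σ
          (W.mulVec fun k => s k i) t t⁻¹ (le_of_lt (inv_pos.mpr ht)) (hWfeas i)
        rw [inv_mul_cancel₀ (ne_of_gt ht)] at this
        intro k
        simpa only [hmv'] using this k
      have hle := hopt W' hfeas'
      have hpow' : ∑ i, ∑ j, ‖W'.mulVec (fun k => s k i) j‖ ^ 2
          = t⁻¹ ^ 2 * ∑ i, ∑ j, ‖W.mulVec (fun k => s k i) j‖ ^ 2 := by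
        simp_rw [hmv', norm_mul, Complex.norm_real, Real.norm_eq_abs,
          abs_of_nonneg (le_of_lt (inv_pos.mpr ht)), mul_pow, Finset.mul_sum]
      rw [← hPPM, hpow'] at hle
      have h1 : PPM ≤ t⁻¹ ^ 2 * P := by
        calc PPM ≤ t⁻¹ ^ 2 * ∑ i, ∑ j, ‖W.mulVec (fun k => s k i) j‖ ^ 2 := hle
          _ ≤ t⁻¹ ^ 2 * P := by
            apply mul_le_mul_of_nonneg_left hWpow
            positivity
      have h2 : t ^ 2 ≤ P / PPM := by
        rw [le_div_iff₀ hPPM0]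
        have ht2 : (0:ℝ) < t ^ 2 := by positivity
        calc t ^ 2 * PPM ≤ t ^ 2 * (t⁻¹ ^ 2 * P) :=
              mul_le_mul_of_nonneg_left h1 (le_of_lt ht2)
          _ = P := by field_simp
      exact (Real.le_sqrt' ht).mpr h2
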